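/- Let X be a set equipped with a cardinal well-ordering ≤. Then the symmetric cancellation ordering on the monoid X^⋄ of monomials corresponding to the full symmetric group 𝔖_X of X and the lexicographic term ordering ≤_lex induced by ≤ is a well-quasi-ordering (that is, ≤_lex is lovely for 𝔖_X). -/

import Mathlib

/-- A quasi-ordering (here: any binary relation) `r` on `S` is a well-quasi-ordering if
every infinite sequence is good, i.e. there are `i < j` with `r (f i) (f j)`. -/
def IsWQO {S : Type*} (r : S → S → Prop) : Prop :=
  ∀ f : ℕ → S, ∃ i j : ℕ, i < j ∧ r (f i) (f j)

/-- A term ordering of the monoid of monomials `X →₀ ℕ`: a linear order which is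
well-founded, with `1 ≤ x` for every indeterminate `x`, and compatible with
multiplication by indeterminates. -/
def IsTermOrder {X : Type*} (r : (X →₀ ℕ) → (X →₀ ℕ) → Prop) : Prop :=
  IsLinearOrder (X →₀ ℕ) r ∧
  WellFounded (fun v w : X →₀ ℕ => r v w ∧ v ≠ w) ∧
  (∀ x : X, r 0 (Finsupp.single x 1)) ∧
  (∀ (v w : X →₀ ℕ) (x : X), r v w → r (Finsupp.single x 1 + v) (Finsupp.single x 1 + w))

/-- The symmetric cancellation ordering corresponding to a permutation group `G` on `X`
and a term ordering `r` of the monomials `X →₀ ℕ`:  `v ⪯ w` iff `r v w` and there are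
`σ ∈ G` and a monomial `u` with `w = u·σv` and `u·σv' ≤ w` for every `v' ≤ v`. -/
def SymCancel {X : Type*} (G : Subgroup (Equiv.Perm X))
    (r : (X →₀ ℕ) → (X →₀ ℕ) → Prop) (v w : X →₀ ℕ) : Prop :=
  r v w ∧ ∃ σ : Equiv.Perm X, σ ∈ G ∧ ∃ u : X →₀ ℕ,
    w = u + Finsupp.mapDomain (⇑σ) v ∧
    ∀ v' : X →₀ ℕ, r v' v → r (u + Finsupp.mapDomain (⇑σ) v') w

/-- The lexicographic ordering of monomials induced by a linear order on `X`:
`v ≤lex w` iff `v = w` or there is `x` with `v x < w x` and `v y = w y` for all `y > x`. -/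
def LexLe {X : Type*} [LinearOrder X] (v w : X →₀ ℕ) : Prop :=
  v = w ∨ ∃ x : X, v x < w x ∧ ∀ y : X, x < y → v y = w y


section Aux

variable {X : Type*} [LinearOrder X]

/-- The strict part of the lexicographic ordering. -/
private def LexLt (v w : X →₀ ℕ) : Prop :=
  ∃ x : X, v x < w x ∧ ∀ y : X, x < y → v y = w y

private lemma lexLt_wf [WellFoundedLT X] : WellFounded (LexLt (X := X)) := by
  haveI : IsTrichotomous X (fun a b : X => b < a) :=
    ⟨fun a b h1 h2 => by rcases lt_trichotomy b a with h|h|h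
                         exacts [absurd h h1, h.symm, absurd h h2]⟩
  have h := Finsupp.Lex.wellFounded' (r := fun a b : X => b < a) (s := ((· < ·) : ℕ → ℕ → Prop))
    (fun n hn => Nat.not_lt_zero n hn) (wellFounded_lt) (wellFounded_lt)
  exact Subrelation.wf (fun {v w} hvw => by
    obtain ⟨x, h1, h2⟩ := hvw
    exact Finsupp.lex_def.mpr ⟨x, fun d hd => h2 d hd, h1⟩) h

private lemma lexLe_total (v w : X →₀ ℕ) : LexLe v w ∨ LexLe w v := by
  by_cases hvw : v = w
  · exact Or.inl (Or.inl hvw)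
  classical
  set D := (v.support ∪ w.support).filter (fun a => v a ≠ w a) with hD
  have hmemD : ∀ a, a ∈ D ↔ v a ≠ w a := by
    intro a
    simp only [hD, Finset.mem_filter, Finset.mem_union, Finsupp.mem_support_iff]
    constructor
    · exact fun h => h.2
    · intro h
      refine ⟨?_, h⟩
      by_contra hc
      push_neg at hc
      exact h (hc.1.trans hc.2.symm)
  have hne : D.Nonempty := by
    by_contra hc
    rw [Finset.not_nonempty_iff_eq_empty] at hc
    apply hvw
    ext a
    by_contra ha
    have : a ∈ D := (hmemD a).mpr ha
    simp [hc] at this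
  set x := D.max' hne with hx
  have hxD : v x ≠ w x := (hmemD x).mp (D.max'_mem hne)
  have habove : ∀ y, x < y → v y = w y := by
    intro y hy
    by_contra hc
    exact absurd (D.le_max' y ((hmemD y).mpr hc)) (not_le.mpr hy)
  rcases hxD.lt_or_gt with h | h
  · exact Or.inl (Or.inr ⟨x, h, habove⟩)
  · exact Or.inr (Or.inr ⟨x, h, fun y hy => (habove y hy).symm⟩)

/-- Any finite "descending staircase" of pairs `(xᵢ, tᵢ)` with `xᵢ ≤ tᵢ` extends to a
permutation of `X` mapping each `xᵢ` to `tᵢ` and not increasing any other point. -/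
private lemma exists_perm (l : List (X × X)) (hle : ∀ p ∈ l, p.1 ≤ p.2)
    (hsort : l.Pairwise (fun p q => q.1 < p.1 ∧ q.2 < p.2)) :
    ∃ σ : Equiv.Perm X, (∀ p ∈ l, σ p.1 = p.2) ∧ (∀ y, y ∉ l.map Prod.fst → σ y ≤ y) ∧
      (∀ z, (∀ p ∈ l, p.2 < z) → σ z = z) := by
  induction l with
  | nil => exact ⟨1, by simp, fun y _ => le_rfl, fun z _ => rfl⟩
  | cons hd tl ih =>
    rw [List.pairwise_cons] at hsort
    obtain ⟨hhd, htl⟩ := hsort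
    obtain ⟨σ', h1, h2, h3⟩ := ih (fun p hp => hle p (List.mem_cons_of_mem _ hp)) htl
    have hhdle : hd.1 ≤ hd.2 := hle hd List.mem_cons_self
    refine ⟨σ' * Equiv.swap hd.1 hd.2, ?_, ?_, ?_⟩
    · intro p hp
      rcases List.mem_cons.mp hp with rfl | hp
      · show σ' (Equiv.swap p.1 p.2 p.1) = p.2
        rw [Equiv.swap_apply_left]
        exact h3 p.2 (fun q hq => (hhd q hq).2)
      · show σ' (Equiv.swap hd.1 hd.2 p.1) = p.2
        have h1' : p.1 ≠ hd.1 := ne_of_lt (hhd p hp).1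
        have h2' : p.1 ≠ hd.2 := ne_of_lt (lt_of_lt_of_le (hhd p hp).1 hhdle)
        rw [Equiv.swap_apply_of_ne_of_ne h1' h2']
        exact h1 p hp
    · intro y hy
      rw [List.map_cons, List.mem_cons] at hy
      push_neg at hy
      obtain ⟨hy1, hy2⟩ := hy
      show σ' (Equiv.swap hd.1 hd.2 y) ≤ y
      by_cases hyt : y = hd.2
      · subst hyt
        rw [Equiv.swap_apply_right]
        have : σ' hd.1 ≤ hd.1 := h2 hd.1 (by
          intro hc
          obtain ⟨q, hq, hq1⟩ := List.mem_map.mp hc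
          exact absurd hq1 (ne_of_lt (hhd q hq).1))
        exact this.trans hhdle
      · rw [Equiv.swap_apply_of_ne_of_ne hy1 hyt]
        exact h2 y hy2
    · intro z hz
      have hz2 : hd.2 < z := hz hd List.mem_cons_self
      have hz1 : hd.1 ≠ z := ne_of_lt (lt_of_le_of_lt hhdle hz2)
      show σ' (Equiv.swap hd.1 hd.2 z) = z
      rw [Equiv.swap_apply_of_ne_of_ne (Ne.symm hz1) (ne_of_gt hz2)]
      exact h3 z (fun q hq => hz q (List.mem_cons_of_mem _ hq))

private lemma pairwise_rel_of_mem {α : Type*} {r : α → α → Prop} {l : List α} (h : l.Pairwise r)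
    {p q : α} (hp : p ∈ l) (hq : q ∈ l) : p = q ∨ r p q ∨ r q p := by
  rw [List.mem_iff_getElem] at hp hq
  obtain ⟨i, hi, rfl⟩ := hp
  obtain ⟨j, hj, rfl⟩ := hq
  rcases lt_trichotomy i j with h' | h' | h'
  · exact Or.inr (Or.inl (List.pairwise_iff_getElem.mp h i j hi hj h'))
  · subst h'; exact Or.inl rfl
  · exact Or.inr (Or.inr (List.pairwise_iff_getElem.mp h j i hj hi h'))

/-- The ascending list of (variable, exponent) pairs of a monomial. -/
private def monoList (v : X →₀ ℕ) : List (X × ℕ) :=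
  (v.support.sort (· ≤ ·)).map (fun x => (x, v x))

/-- The key construction: a (componentwise dominating) embedding of `monoList v` into
`monoList w` together with `v ≤lex w` yields the symmetric cancellation relation. -/
private lemma symCancel_of_emb (v w : X →₀ ℕ) (hlex : LexLe v w)
    (hemb : List.SublistForall₂ (· ≤ ·) (monoList v) (monoList w)) :
    SymCancel ⊤ LexLe v w := by
  classical
  obtain ⟨l', hf, hsub⟩ := List.sublistForall₂_iff.mp hemb
  set xs := v.support.sort (· ≤ ·) with hxs
  have hl'mem : ∀ p ∈ l', p.2 = w p.1 := by
    intro p hp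
    have : p ∈ monoList w := hsub.subset hp
    obtain ⟨x, _, rfl⟩ := List.mem_map.mp this
    rfl
  have hf1 : List.Forall₂ (fun (x : X) (q : X × ℕ) => x ≤ q.1 ∧ v x ≤ q.2) xs l' := by
    rw [monoList, List.forall₂_map_left_iff] at hf
    exact hf.imp (fun {a b} h => ⟨(Prod.le_def.mp h).1, (Prod.le_def.mp h).2⟩)
  have hlen : xs.length = l'.length := by
    have := hf.length_eq
    simp only [monoList, List.length_map] at this
    exact this
  set P : List (X × X) := (xs.zip l').map (fun q => (q.1, q.2.1)) with hP
  have hPfst : P.map Prod.fst = xs := by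
    rw [hP, List.map_map]
    exact List.map_fst_zip hlen.le
  have hPmem : ∀ p ∈ P, p.1 ≤ p.2 ∧ v p.1 ≤ w p.2 := by
    intro p hp
    obtain ⟨q, hq, rfl⟩ := List.mem_map.mp hp
    have hq' : (q.1, q.2) ∈ xs.zip l' := by simpa using hq
    have hr := List.forall₂_zip hf1 hq'
    have hb : q.2 ∈ l' := (List.of_mem_zip hq').2
    exact ⟨hr.1, (hl'mem q.2 hb) ▸ hr.2⟩
  have hxs_sorted : xs.Pairwise (· < ·) := (Finset.sortedLT_sort _).pairwise
  have hts_sorted : (l'.map Prod.fst).Pairwise (· < ·) := by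
    have h1 : (monoList w).map Prod.fst = w.support.sort (· ≤ ·) := by
      rw [monoList, List.map_map]
      exact List.map_id'' (fun x => rfl) _
    have h2 : List.Sublist (l'.map Prod.fst) ((monoList w).map Prod.fst) := hsub.map _
    rw [h1] at h2
    exact List.Pairwise.sublist h2 (Finset.sortedLT_sort _).pairwise
  have hP_pairwise : P.Pairwise (fun p q => p.1 < q.1 ∧ p.2 < q.2) := by
    rw [hP, List.pairwise_map, List.pairwise_iff_getElem]
    intro i j hi hj hij
    have hi' : i < xs.length := by simpa using lt_of_lt_of_le hi (by rw [List.length_zip]; omega)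
    have hj' : j < xs.length := by simpa using lt_of_lt_of_le hj (by rw [List.length_zip]; omega)
    have hil : i < l'.length := hlen ▸ hi'
    have hjl : j < l'.length := hlen ▸ hj'
    rw [List.getElem_zip, List.getElem_zip]
    constructor
    · exact List.pairwise_iff_getElem.mp hxs_sorted i j hi' hj' hij
    · have := List.pairwise_iff_getElem.mp hts_sorted i j (by simpa using hil)
        (by simpa using hjl) hij
      simpa using this
  obtain ⟨σ, hσ1, hσ2, -⟩ := exists_perm P.reverse
    (fun p hp => (hPmem p (List.mem_reverse.mp hp)).1)
    (List.pairwise_reverse.mpr hP_pairwise)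
  have hσ1' : ∀ p ∈ P, σ p.1 = p.2 := fun p hp => hσ1 p (List.mem_reverse.mpr hp)
  have hσ2' : ∀ y, y ∉ v.support → σ y ≤ y := by
    intro y hy
    apply hσ2
    rw [List.map_reverse, List.mem_reverse, hPfst, hxs, Finset.mem_sort]
    exact hy
  have hmemP : ∀ x ∈ v.support, ∃ p ∈ P, p.1 = x := by
    intro x hx
    have : x ∈ P.map Prod.fst := by rw [hPfst, hxs, Finset.mem_sort]; exact hx
    obtain ⟨p, hp, hpx⟩ := List.mem_map.mp this
    exact ⟨p, hp, hpx⟩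
  have B1 : ∀ x ∈ v.support, x ≤ σ x ∧ v x ≤ w (σ x) := by
    intro x hx
    obtain ⟨p, hp, rfl⟩ := hmemP x hx
    rw [hσ1' p hp]
    exact hPmem p hp
  have B2 : ∀ x ∈ v.support, ∀ x' ∈ v.support, x < x' → σ x < σ x' := by
    intro x hx x' hx' hlt
    obtain ⟨p, hp, rfl⟩ := hmemP x hx
    obtain ⟨p', hp', rfl⟩ := hmemP x' hx'
    rw [hσ1' p hp, hσ1' p' hp']
    rcases pairwise_rel_of_mem hP_pairwise hp hp' with heq | h | h
    · exact absurd (heq ▸ hlt) (lt_irrefl _)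
    · exact h.2
    · exact absurd hlt (not_lt.mpr h.1.le)
  have C : ∀ x ∈ v.support, ∀ d, d < x → σ d < σ x := by
    intro x hx d hd
    by_cases hdv : d ∈ v.support
    · exact B2 d hdv x hx hd
    · exact lt_of_le_of_lt (hσ2' d hdv) (lt_of_lt_of_le hd (B1 x hx).1)
  have hmap : ∀ (a : X →₀ ℕ), Finsupp.mapDomain (⇑σ) a = Finsupp.equivMapDomain σ a :=
    fun a => (Finsupp.equivMapDomain_eq_mapDomain σ a).symm
  have G1 : ∀ z, Finsupp.mapDomain (⇑σ) v z ≤ w z := by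
    intro z
    rw [hmap, Finsupp.equivMapDomain_apply]
    by_cases hz : σ.symm z ∈ v.support
    · have := (B1 _ hz).2
      rwa [Equiv.apply_symm_apply] at this
    · rw [Finsupp.notMem_support_iff.mp hz]; exact Nat.zero_le _
  set u := w - Finsupp.mapDomain (⇑σ) v with hu_def
  have hu : w = u + Finsupp.mapDomain (⇑σ) v := by
    ext a
    rw [Finsupp.add_apply, hu_def, Finsupp.tsub_apply]
    exact (Nat.sub_add_cancel (G1 a)).symm
  refine ⟨hlex, σ, Subgroup.mem_top σ, u, hu, ?_⟩
  intro v' hv'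
  have hv'' : v' = v ∨ ∃ x, v' x < v x ∧ ∀ y, x < y → v' y = v y := hv'
  rcases hv'' with rfl | ⟨x, hx1, hx2⟩
  · exact Or.inl hu.symm
  · right
    have hxs' : x ∈ v.support := Finsupp.mem_support_iff.mpr (by omega)
    refine ⟨σ x, ?_, ?_⟩
    · rw [hu, Finsupp.add_apply, Finsupp.add_apply, hmap, hmap,
        Finsupp.equivMapDomain_apply, Finsupp.equivMapDomain_apply, Equiv.symm_apply_apply]
      exact Nat.add_lt_add_left hx1 _
    · intro y hy
      rw [hu, Finsupp.add_apply, Finsupp.add_apply, hmap, hmap,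
        Finsupp.equivMapDomain_apply, Finsupp.equivMapDomain_apply]
      congr 1
      rcases lt_trichotomy x (σ.symm y) with h | h | h
      · exact hx2 _ h
      · exfalso
        rw [h, Equiv.apply_symm_apply] at hy
        exact lt_irrefl y hy
      · exfalso
        have := C x hxs' (σ.symm y) h
        rw [Equiv.apply_symm_apply] at this
        exact absurd hy (not_lt.mpr this.le)

end Aux

/-- For a cardinal well-ordering of a set `X` (a well-ordering all of
whose proper initial segments have cardinality `< |X|`), the symmetric cancellation
ordering on monomials corresponding to the full symmetric group `𝔖_X` and the induced
lexicographic term ordering is a well-quasi-ordering (i.e. `≤lex` is lovely for `𝔖_X`). -/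
theorem stmt2 {X : Type*} [LinearOrder X] [WellFoundedLT X]
    (hcard : ∀ a : X, Cardinal.mk {x : X // x < a} < Cardinal.mk X) :
    IsWQO (SymCancel (⊤ : Subgroup (Equiv.Perm X)) (LexLe (X := X))) := by
  intro f
  classical
  have hX : (Set.univ : Set X).IsPWO := (Set.isWF_univ_iff.mpr ⟨wellFounded_lt⟩).isPWO
  have hN : (Set.univ : Set ℕ).IsPWO := (Set.isWF_univ_iff.mpr ⟨wellFounded_lt⟩).isPWO
  have hXN : (Set.univ : Set (X × ℕ)).IsPWO := by
    rw [← Set.univ_prod_univ]; exact hX.prod hN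
  have hH := Set.PartiallyWellOrderedOn.partiallyWellOrderedOn_sublistForall₂
    ((· ≤ ·) : X × ℕ → X × ℕ → Prop) hXN
  haveI : IsPreorder (List (X × ℕ)) (List.SublistForall₂ ((· ≤ ·) : X × ℕ → X × ℕ → Prop)) := {}
  obtain ⟨g, hg⟩ := hH.exists_monotone_subseq (f := fun n => monoList (f n))
    (fun n => by intro x _; trivial)
  have hpair : ∃ i j : ℕ, i < j ∧ LexLe (f (g i)) (f (g j)) := by
    by_contra hno
    push_neg at hno
    have hdesc : ∀ n, LexLt (f (g (n+1))) (f (g n)) := by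
      intro n
      rcases lexLe_total (f (g (n+1))) (f (g n)) with h | h
      · rcases (show _ = _ ∨ ∃ x, _ from h) with heq | hlt
        · exact absurd (Or.inl heq.symm : LexLe (f (g n)) (f (g (n+1))))
            (hno n (n+1) n.lt_succ_self)
        · exact hlt
      · exact absurd h (hno n (n+1) n.lt_succ_self)
    obtain ⟨m, ⟨k, hk⟩, hmin⟩ := lexLt_wf.has_min (Set.range (fun n => f (g n)))
      ⟨f (g 0), ⟨0, rfl⟩⟩
    exact hmin (f (g (k+1))) ⟨k+1, rfl⟩ (hk ▸ hdesc k)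
  obtain ⟨i, j, hij, hlex⟩ := hpair
  exact ⟨g i, g j, g.strictMono hij, symCancel_of_emb _ _ hlex (hg i j hij.le)⟩
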